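/- Let m ≥ 1, d = 2^m, and let ρ ∈ ℂ^(d×d) be a density matrix. Suppose M, M̃ ∈ ℂ^(d×d) satisfy 0 ⪯ M ⪯ I and 0 ⪯ M̃ ⪯ I. Suppose M is 2δ-non-negligible with respect to ρ, where 0 < δ ≤ 1/2, and Tr(M) ≥ 1. Suppose ‖M − M̃‖ ≤ μ, where μ ≤ (2/3)·δ·2^(−m). Then M̃ is δ-non-negligible with respect to ρ, i.e. Tr(M̃ρ) ≥ δ·Tr(M̃)/d. -/

import Mathlib

open ComplexOrder
section Aux
open Matrix

lemma aux_trace_re_nonneg {d : ℕ} {P : Matrix (Fin d) (Fin d) ℂ} (hP : P.PosSemidef) :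
    0 ≤ P.trace.re := by
  have h : ∀ i, 0 ≤ (P i i).re := by
    intro i
    have h2 := hP.dotProduct_mulVec_nonneg (Pi.single i 1)
    have he : star (Pi.single i (1:ℂ)) ⬝ᵥ (P *ᵥ Pi.single i 1) = P i i := by
      simp [mulVec_single, ← Pi.single_star, single_dotProduct]
    rw [he] at h2
    exact (Complex.le_def.mp h2).1
  rw [Matrix.trace, Complex.re_sum]
  exact Finset.sum_nonneg fun i _ => h i

open scoped MatrixOrder in
lemma aux_trace_mul_re_nonneg {d : ℕ} {A B : Matrix (Fin d) (Fin d) ℂ}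
    (hA : A.PosSemidef) (hB : B.PosSemidef) : 0 ≤ ((A * B).trace).re := by
  obtain ⟨S, hSherm, hS⟩ : ∃ S : Matrix (Fin d) (Fin d) ℂ, S.IsHermitian ∧ S * S = B :=
    ⟨CFC.sqrt B, (CFC.sqrt_nonneg B).posSemidef.1, CFC.sqrt_mul_sqrt_self B hB.nonneg⟩
  have h1 : (A * B).trace = (S * A * S).trace := by
    rw [← hS, ← mul_assoc, Matrix.trace_mul_comm, ← mul_assoc]
  have hpsd : (S * A * Sᴴ).PosSemidef := hA.mul_mul_conjTranspose_same _
  rw [hSherm.eq] at hpsd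
  rw [h1]
  exact aux_trace_re_nonneg hpsd

lemma aux_psd_of_norm_le {d : ℕ} {A : Matrix (Fin d) (Fin d) ℂ} (hA : A.IsHermitian)
    {μ : ℝ} (hn : ‖Matrix.toEuclideanCLM (𝕜 := ℂ) A‖ ≤ μ) :
    ((μ : ℂ) • 1 - A).PosSemidef ∧ ((μ : ℂ) • 1 + A).PosSemidef := by
  set T := Matrix.toEuclideanCLM (𝕜 := ℂ) A with hT
  have herm1 : ((μ : ℂ) • 1 - A).IsHermitian := by
    simp [Matrix.IsHermitian, conjTranspose_smul, conjTranspose_sub, hA.eq,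
      Complex.star_def, Complex.conj_ofReal]
  have herm2 : ((μ : ℂ) • 1 + A).IsHermitian := by
    simp [Matrix.IsHermitian, conjTranspose_smul, conjTranspose_add, hA.eq,
      Complex.star_def, Complex.conj_ofReal]
  have key : ∀ x : Fin d → ℂ,
      (star x ⬝ᵥ (A *ᵥ x)).im = 0 ∧
      |(star x ⬝ᵥ (A *ᵥ x)).re| ≤ μ * (star x ⬝ᵥ x).re ∧
      (star x ⬝ᵥ x).im = 0 := by
    intro x
    set y : EuclideanSpace ℂ (Fin d) := (WithLp.equiv 2 _).symm x with hy
    have h1 : star x ⬝ᵥ (A *ᵥ x) = inner ℂ y (T y) := by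
      rw [dotProduct_comm]; exact (EuclideanSpace.inner_toLp_toLp x (A *ᵥ x)).symm
    have h2 : star x ⬝ᵥ x = inner ℂ y y := (dotProduct_comm _ _).trans (EuclideanSpace.inner_toLp_toLp x x).symm
    have h3 : (inner ℂ y y : ℂ) = (‖y‖ ^ 2 : ℝ) := by
      rw [inner_self_eq_norm_sq_to_K]; norm_cast
    have hsym : (T : EuclideanSpace ℂ (Fin d) →ₗ[ℂ] EuclideanSpace ℂ (Fin d)).IsSymmetric := by
      rw [Matrix.coe_toEuclideanCLM_eq_toEuclideanLin]
      exact Matrix.isHermitian_iff_isSymmetric.mp hA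
    have hreal : (inner ℂ y (T y) : ℂ).im = 0 := by
      have h4 := hsym y y
      have h5 : (starRingEnd ℂ) (inner ℂ y (T y)) = inner ℂ y (T y) := by
        rw [inner_conj_symm]
        exact h4
      rw [Complex.conj_eq_iff_im] at h5
      exact h5
    have habs : ‖(inner ℂ y (T y) : ℂ)‖ ≤ μ * ‖y‖ ^ 2 := by
      calc ‖(inner ℂ y (T y) : ℂ)‖ ≤ ‖y‖ * ‖T y‖ := norm_inner_le_norm _ _
        _ ≤ ‖y‖ * (‖T‖ * ‖y‖) := by
            have := T.le_opNorm y
            nlinarith [norm_nonneg y]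
        _ ≤ μ * ‖y‖ ^ 2 := by nlinarith [norm_nonneg y, norm_nonneg (T y), T.le_opNorm y]
    refine ⟨by rw [h1]; exact hreal, ?_, by rw [h2, h3]; exact Complex.ofReal_im _⟩
    rw [h1, h2, h3]
    have : |(inner ℂ y (T y) : ℂ).re| ≤ ‖(inner ℂ y (T y) : ℂ)‖ := Complex.abs_re_le_norm _
    simp only [Complex.ofReal_re]
    linarith
  constructor <;> refine Matrix.PosSemidef.of_dotProduct_mulVec_nonneg (by assumption) (fun x => ?_) <;>
  · obtain ⟨him, hre, him2⟩ := key x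
    rw [Complex.le_def]
    constructor
    · simp only [sub_mulVec, add_mulVec, smul_mulVec, one_mulVec, dotProduct_sub,
        dotProduct_add, dotProduct_smul, Complex.sub_re, Complex.add_re, Complex.zero_re,
        Complex.smul_re, smul_eq_mul, Complex.ofReal_re, Complex.ofReal_im, Complex.mul_re,
        Complex.mul_im]
      cases abs_le.mp hre with
      | intro a b => nlinarith
    · simp only [sub_mulVec, add_mulVec, smul_mulVec, one_mulVec, dotProduct_sub,
        dotProduct_add, dotProduct_smul, Complex.sub_im, Complex.add_im, Complex.zero_im,
        smul_eq_mul, Complex.mul_im, Complex.ofReal_re, Complex.ofReal_im, him, him2]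
      ring

end Aux

/-- If `ρ` is a density matrix on `d = 2^m` dimensions, `0 ⪯ M ⪯ I` is
`2δ`-non-negligible with respect to `ρ` (i.e. `Tr(Mρ) ≥ 2δ·Tr(M)/d`) with
`0 < δ ≤ 1/2` and `Tr(M) ≥ 1`, and `0 ⪯ M̃ ⪯ I` satisfies `‖M - M̃‖ ≤ μ` in
operator norm with `μ ≤ (2/3)·δ·2^{-m}`, then `M̃` is `δ`-non-negligible:
`Tr(M̃ρ) ≥ δ·Tr(M̃)/d`. -/
theorem nonnegligible_of_close
    (m d : ℕ) (hm : 1 ≤ m) (hd : d = 2 ^ m)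
    (ρ : Matrix (Fin d) (Fin d) ℂ) (hρ : ρ.PosSemidef) (hρtr : ρ.trace = 1)
    (M Mt : Matrix (Fin d) (Fin d) ℂ)
    (hM0 : M.PosSemidef) (hM1 : (1 - M).PosSemidef)
    (hMt0 : Mt.PosSemidef) (hMt1 : (1 - Mt).PosSemidef)
    (δ : ℝ) (hδ0 : 0 < δ) (hδ : δ ≤ 1 / 2)
    (hMnn : 2 * δ * M.trace.re / d ≤ (M * ρ).trace.re)
    (hMtr : 1 ≤ M.trace.re)
    (μ : ℝ) (hμ : μ ≤ (2 / 3) * δ * (2 : ℝ) ^ (-(m : ℝ)))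
    (hclose : ‖Matrix.toEuclideanCLM (𝕜 := ℂ) (M - Mt)‖ ≤ μ) :
    δ * Mt.trace.re / d ≤ (Mt * ρ).trace.re := by
  set A := M - Mt with hA
  have hμ0 : 0 ≤ μ := le_trans (norm_nonneg _) hclose
  have hAherm : A.IsHermitian := hM0.1.sub hMt0.1
  obtain ⟨hpsd1, hpsd2⟩ := aux_psd_of_norm_le hAherm hclose
  have hdpos : (0 : ℝ) < d := by
    rw [hd]; positivity
  have hd2 : (2 : ℝ) ≤ d := by
    have : 2 ^ 1 ≤ 2 ^ m := Nat.pow_le_pow_right (by norm_num) hm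
    rw [hd]
    exact_mod_cast by simpa using this
  -- μ bound: μ ≤ (2/3) * δ / d
  have hμd : μ ≤ (2 / 3) * δ / d := by
    have : (2 : ℝ) ^ (-(m : ℝ)) = 1 / d := by
      rw [Real.rpow_neg (by norm_num), Real.rpow_natCast, hd]
      push_cast
      rw [one_div]
    rw [this, mul_one_div] at hμ
    exact hμ
  -- trace bound: Tr(A ρ).re ≤ μ
  have htr1 : (A * ρ).trace.re ≤ μ := by
    have h := aux_trace_mul_re_nonneg hpsd1 hρ
    have he : (((μ : ℂ) • 1 - A) * ρ).trace = (μ : ℂ) * ρ.trace - (A * ρ).trace := by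
      rw [sub_mul, Matrix.trace_sub, smul_mul_assoc, one_mul, Matrix.trace_smul, smul_eq_mul]
    rw [he, hρtr, mul_one, Complex.sub_re, Complex.ofReal_re] at h
    linarith
  -- trace bound: -μ * d ≤ Tr(A).re
  have htr2 : -(μ * d) ≤ A.trace.re := by
    have h := aux_trace_re_nonneg hpsd2
    have he : ((μ : ℂ) • 1 + A).trace = (μ : ℂ) * d + A.trace := by
      rw [Matrix.trace_add, Matrix.trace_smul, Matrix.trace_one, smul_eq_mul]
      norm_num
    rw [he, Complex.add_re, Complex.mul_re] at h
    simp only [Complex.ofReal_re, Complex.ofReal_im, Complex.natCast_re, Complex.natCast_im] at h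
    linarith
  -- unfold A
  have hAtr : A.trace.re = M.trace.re - Mt.trace.re := by
    rw [hA, Matrix.trace_sub, Complex.sub_re]
  have hAmul : (A * ρ).trace.re = (M * ρ).trace.re - (Mt * ρ).trace.re := by
    rw [hA, sub_mul, Matrix.trace_sub, Complex.sub_re]
  rw [hAtr] at htr2
  rw [hAmul] at htr1
  -- final arithmetic
  have hμd' : μ * d ≤ 2 / 3 * δ := (le_div_iff₀ hdpos).mp hμd
  rw [div_le_iff₀ hdpos] at hMnn ⊢
  nlinarith [mul_le_mul_of_nonneg_right hδ (mul_nonneg hμ0 hdpos.le),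
    mul_le_mul_of_nonneg_left hMtr hδ0.le,
    mul_le_mul_of_nonneg_left htr2 hδ0.le,
    mul_le_mul_of_nonneg_right htr1 hdpos.le,
    mul_nonneg hμ0 hdpos.le]
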